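/- If vectors satisfy γ ≺ η in ℝᵏ and δ ≺ ν in ℝᵐ, then the concatenation (γ, δ) ≺ (η, ν) in ℝ^{k+m}; moreover, if additionally γ↓ ≠ η↓, then (γ,δ)↓ ≠ (η,ν)↓, i.e., the concatenated majorization is strict. -/

import Mathlib

open Finset

/-- Decreasing rearrangement of a vector in ℝⁿ. -/
noncomputable def dsort {n : ℕ} (u : Fin n → ℝ) : Fin n → ℝ :=
  u ∘ Tuple.sort (fun i => -u i)

/-- `Maj u v` : `u` is majorized by `v`. -/
def Maj {n : ℕ} (u v : Fin n → ℝ) : Prop :=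
  (∀ k : ℕ, ∑ i ∈ univ.filter (fun i : Fin n => (i : ℕ) < k), dsort u i ≤
      ∑ i ∈ univ.filter (fun i : Fin n => (i : ℕ) < k), dsort v i) ∧
  ∑ i, u i = ∑ i, v i

namespace Stmt16Aux

/-- sum of the `j` largest entries -/
noncomputable def topSum {n : ℕ} (u : Fin n → ℝ) (j : ℕ) : ℝ :=
  ∑ i ∈ univ.filter (fun i : Fin n => (i : ℕ) < j), dsort u i

lemma dsort_anti {n : ℕ} (u : Fin n → ℝ) : Antitone (dsort u) := by
  intro a b hab
  have h := Tuple.monotone_sort (fun i => -u i) hab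
  simp only [Function.comp] at h
  simpa [dsort] using neg_le_neg_iff.mp h

lemma strictMono_nat_le {c : ℕ} (g : Fin c → ℕ) (hg : StrictMono g) :
    ∀ v (h : v < c), v ≤ g ⟨v, h⟩ := by
  intro v
  induction v with
  | zero => exact fun _ => Nat.zero_le _
  | succ t ih =>
    intro h
    have h' : t < c := Nat.lt_of_succ_lt h
    have h2 := hg (show (⟨t, h'⟩ : Fin c) < ⟨t + 1, h⟩ by simp [Fin.lt_def])
    have h3 := ih h'
    omega

lemma filter_lt_eq_map {n j : ℕ} (h : j ≤ n) :
    (univ.filter (fun i : Fin n => (i : ℕ) < j)) = Finset.map (Fin.castLEEmb h) univ := by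
  ext x
  simp only [mem_filter, mem_univ, true_and, Finset.mem_map]
  constructor
  · intro hx
    exact ⟨⟨x, hx⟩, by simp [Fin.castLEEmb, Fin.ext_iff]⟩
  · rintro ⟨y, rfl⟩
    simp [Fin.castLEEmb]

lemma card_filter_lt {n : ℕ} (j : ℕ) :
    (univ.filter (fun i : Fin n => (i : ℕ) < j)).card = min j n := by
  rcases le_total j n with h | h
  · rw [filter_lt_eq_map h, Finset.card_map, card_univ, Fintype.card_fin, Nat.min_eq_left h]
  · rw [filter_true_of_mem (fun i _ => lt_of_lt_of_le i.2 h)]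
    simp [Nat.min_eq_right h]

lemma sum_filter_lt {n c : ℕ} (h : c ≤ n) (w : Fin n → ℝ) :
    ∑ i ∈ univ.filter (fun i : Fin n => (i : ℕ) < c), w i
      = ∑ i : Fin c, w (Fin.castLE h i) := by
  rw [filter_lt_eq_map h, Finset.sum_map]
  rfl

lemma sum_le_of_antitone {n : ℕ} (w : Fin n → ℝ) (hw : Antitone w) (T : Finset (Fin n)) :
    ∑ i ∈ T, w i ≤ ∑ i ∈ univ.filter (fun i : Fin n => (i : ℕ) < T.card), w i := by
  have hc : T.card ≤ n := by
    simpa using Finset.card_le_card (Finset.subset_univ T)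
  set c := T.card with hcdef
  let e := T.orderIsoOfFin hcdef.symm
  have hg : StrictMono (fun i : Fin c => ((e i : Fin n) : ℕ)) := by
    intro x y hxy
    exact_mod_cast (e.strictMono hxy)
  have key : ∀ i : Fin c, w ((e i : Fin n)) ≤ w (Fin.castLE hc i) := by
    intro i
    apply hw
    have := strictMono_nat_le _ hg i i.2
    simpa [Fin.le_def] using this
  calc ∑ i ∈ T, w i = ∑ i : T, w i := (Finset.sum_coe_sort T w).symm
    _ = ∑ i : Fin c, w (e i) := (Equiv.sum_comp e.toEquiv (fun i : T => w i)).symm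
    _ ≤ ∑ i : Fin c, w (Fin.castLE hc i) := Finset.sum_le_sum (fun i _ => key i)
    _ = ∑ i ∈ univ.filter (fun i : Fin n => (i : ℕ) < c), w i := (sum_filter_lt hc w).symm

/-- The set of indices realizing the top-`j` sum. -/
noncomputable def Sset {n : ℕ} (u : Fin n → ℝ) (j : ℕ) : Finset (Fin n) :=
  (univ.filter (fun i : Fin n => (i : ℕ) < j)).map (Tuple.sort (fun i => -u i)).toEmbedding

lemma sum_Sset {n : ℕ} (u : Fin n → ℝ) (j : ℕ) : ∑ i ∈ Sset u j, u i = topSum u j := by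
  rw [Sset, Finset.sum_map]
  rfl

lemma card_Sset {n : ℕ} (u : Fin n → ℝ) (j : ℕ) : (Sset u j).card = min j n := by
  rw [Sset, Finset.card_map, card_filter_lt]

lemma Sset_mono {n : ℕ} (u : Fin n → ℝ) {j j' : ℕ} (h : j ≤ j') : Sset u j ⊆ Sset u j' := by
  apply Finset.map_subset_map.mpr
  exact Finset.monotone_filter_right _ (fun i _ hi => lt_of_lt_of_le hi h)

lemma Sset_zero {n : ℕ} (u : Fin n → ℝ) : Sset u 0 = ∅ := by
  simp [Sset]

lemma Sset_univ {n : ℕ} (u : Fin n → ℝ) {j : ℕ} (h : n ≤ j) : Sset u j = univ := by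
  apply Finset.eq_univ_of_card
  rw [card_Sset]
  simp [Nat.min_eq_right h]

lemma sum_le_topSum {n : ℕ} (u : Fin n → ℝ) (S : Finset (Fin n)) :
    ∑ i ∈ S, u i ≤ topSum u S.card := by
  set σ := Tuple.sort (fun i => -u i) with hσ
  set T := S.map σ.symm.toEmbedding with hT
  have hsum : ∑ i ∈ T, dsort u i = ∑ i ∈ S, u i := by
    rw [hT, Finset.sum_map]
    apply Finset.sum_congr rfl
    intro x _
    simp [dsort, hσ]
  have hcard : T.card = S.card := Finset.card_map _
  rw [topSum, ← hcard, ← hsum]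
  exact sum_le_of_antitone (dsort u) (dsort_anti u) T

lemma topSum_min {n : ℕ} (u : Fin n → ℝ) (j : ℕ) : topSum u (min j n) = topSum u j := by
  unfold topSum
  apply Finset.sum_congr _ (fun _ _ => rfl)
  apply Finset.filter_congr
  intro i _
  simp only [lt_min_iff, eq_iff_iff]
  exact ⟨fun h => h.1, fun h => ⟨h, i.2⟩⟩

lemma sum_split {p q : ℕ} {M : Type*} [AddCommMonoid M] (f : Fin (p + q) → M)
    (S : Finset (Fin (p + q))) :
    ∑ i ∈ S, f i
      = ∑ i ∈ univ.filter (fun i : Fin p => Fin.castAdd q i ∈ S), f (Fin.castAdd q i)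
        + ∑ i ∈ univ.filter (fun i : Fin q => Fin.natAdd p i ∈ S), f (Fin.natAdd p i) := by
  have h0 : ∑ i ∈ S, f i = ∑ i : Fin (p + q), if i ∈ S then f i else 0 := by
    rw [Finset.sum_ite_mem, Finset.univ_inter]
  rw [h0, Fin.sum_univ_add, Finset.sum_filter, Finset.sum_filter]

lemma card_split {p q : ℕ} (S : Finset (Fin (p + q))) :
    S.card = (univ.filter (fun i : Fin p => Fin.castAdd q i ∈ S)).card
      + (univ.filter (fun i : Fin q => Fin.natAdd p i ∈ S)).card := by
  have h := sum_split (M := ℕ) (fun _ => 1) S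
  rw [Finset.card_eq_sum_ones S, Finset.card_eq_sum_ones, Finset.card_eq_sum_ones]
  exact h

lemma topSum_append_ge {p q : ℕ} (η : Fin p → ℝ) (ν : Fin q → ℝ) {a b : ℕ}
    (ha : a ≤ p) (hb : b ≤ q) :
    topSum η a + topSum ν b ≤ topSum (Fin.append η ν) (a + b) := by
  set A := (Sset η a).map (Fin.castAddEmb q) with hA
  set B := (Sset ν b).map (Fin.natAddEmb p) with hB
  have hdisj : Disjoint A B := by
    rw [Finset.disjoint_left]
    rintro x hx hx'
    rw [hA, Finset.mem_map] at hx
    rw [hB, Finset.mem_map] at hx'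
    obtain ⟨y, _, rfl⟩ := hx
    obtain ⟨z, _, hz⟩ := hx'
    have : p + (z : ℕ) = (y : ℕ) := by
      exact congrArg Fin.val hz
    omega
  have hcard : (A ∪ B).card = a + b := by
    rw [Finset.card_union_of_disjoint hdisj, hA, hB, Finset.card_map, Finset.card_map,
      card_Sset, card_Sset, Nat.min_eq_left ha, Nat.min_eq_left hb]
  have hsum : ∑ i ∈ A ∪ B, Fin.append η ν i = topSum η a + topSum ν b := by
    rw [Finset.sum_union hdisj, hA, hB, Finset.sum_map, Finset.sum_map]
    rw [← sum_Sset η a, ← sum_Sset ν b]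
    congr 1
    · exact Finset.sum_congr rfl (fun x _ => Fin.append_left η ν x)
    · exact Finset.sum_congr rfl (fun x _ => Fin.append_right η ν x)
  calc topSum η a + topSum ν b = ∑ i ∈ A ∪ B, Fin.append η ν i := hsum.symm
    _ ≤ topSum (Fin.append η ν) ((A ∪ B).card) := sum_le_topSum _ _
    _ = topSum (Fin.append η ν) (a + b) := by rw [hcard]

lemma topSum_succ {n : ℕ} (u : Fin n → ℝ) (i : Fin n) :
    topSum u ((i : ℕ) + 1) = topSum u i + dsort u i := by
  unfold topSum
  have h : (univ.filter (fun x : Fin n => (x : ℕ) < (i : ℕ) + 1))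
      = insert i (univ.filter (fun x : Fin n => (x : ℕ) < (i : ℕ))) := by
    ext x
    simp only [mem_filter, mem_univ, true_and, Finset.mem_insert]
    constructor
    · intro hx
      rcases Nat.lt_succ_iff_lt_or_eq.mp hx with h | h
      · exact Or.inr h
      · exact Or.inl (Fin.ext h)
    · rintro (rfl | h)
      · omega
      · omega
  rw [h, Finset.sum_insert (by simp)]
  ring

lemma dsort_eq_of_topSum {n : ℕ} (u v : Fin n → ℝ) (h : ∀ j, topSum u j = topSum v j) :
    dsort u = dsort v := by
  funext i
  have h1 := topSum_succ u i
  have h2 := topSum_succ v i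
  have e1 := h i
  have e2 := h ((i : ℕ) + 1)
  linarith

end Stmt16Aux

open Stmt16Aux in
theorem stmt16 {k m : ℕ} (γ η : Fin k → ℝ) (δ ν : Fin m → ℝ)
    (h1 : Maj γ η) (h2 : Maj δ ν) :
    Maj (Fin.append γ δ) (Fin.append η ν) ∧
      (dsort γ ≠ dsort η → dsort (Fin.append γ δ) ≠ dsort (Fin.append η ν)) := by
  classical
  set S : ℕ → Finset (Fin (k + m)) := fun j => Sset (Fin.append γ δ) j with hS
  set A : ℕ → Finset (Fin k) := fun j => univ.filter (fun i : Fin k => Fin.castAdd m i ∈ S j)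
    with hAdef
  set B : ℕ → Finset (Fin m) := fun j => univ.filter (fun i : Fin m => Fin.natAdd k i ∈ S j)
    with hBdef
  have hak : ∀ j, (A j).card ≤ k := fun j => by
    simpa using Finset.card_le_card (Finset.subset_univ (A j))
  have hbm : ∀ j, (B j).card ≤ m := fun j => by
    simpa using Finset.card_le_card (Finset.subset_univ (B j))
  have hab : ∀ j, (A j).card + (B j).card = min j (k + m) := fun j => by
    rw [← card_split (S j), hS, card_Sset]
  have hsplit : ∀ j, topSum (Fin.append γ δ) j = ∑ i ∈ A j, γ i + ∑ i ∈ B j, δ i := by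
    intro j
    rw [← sum_Sset (Fin.append γ δ) j, sum_split]
    congr 1
    · exact Finset.sum_congr rfl (fun x _ => Fin.append_left γ δ x)
    · exact Finset.sum_congr rfl (fun x _ => Fin.append_right γ δ x)
  have step1 : ∀ j, topSum (Fin.append γ δ) j ≤ topSum γ (A j).card + topSum δ (B j).card := by
    intro j
    rw [hsplit j]
    exact add_le_add (sum_le_topSum γ (A j)) (sum_le_topSum δ (B j))
  have step2 : ∀ j, topSum γ (A j).card + topSum δ (B j).card
      ≤ topSum η (A j).card + topSum ν (B j).card := by
    intro j
    exact add_le_add (h1.1 (A j).card) (h2.1 (B j).card)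
  have step3 : ∀ j, topSum η (A j).card + topSum ν (B j).card ≤ topSum (Fin.append η ν) j := by
    intro j
    calc topSum η (A j).card + topSum ν (B j).card
        ≤ topSum (Fin.append η ν) ((A j).card + (B j).card) :=
          topSum_append_ge η ν (hak j) (hbm j)
      _ = topSum (Fin.append η ν) (min j (k + m)) := by rw [hab j]
      _ = topSum (Fin.append η ν) j := topSum_min _ j
  have hmaj : Maj (Fin.append γ δ) (Fin.append η ν) := by
    constructor
    · intro j
      exact le_trans (step1 j) (le_trans (step2 j) (step3 j))
    · rw [Fin.sum_univ_add, Fin.sum_univ_add]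
      have e1 : ∀ i : Fin k, Fin.append γ δ (Fin.castAdd m i) = γ i := Fin.append_left γ δ
      have e2 : ∀ i : Fin m, Fin.append γ δ (Fin.natAdd k i) = δ i := Fin.append_right γ δ
      have e3 : ∀ i : Fin k, Fin.append η ν (Fin.castAdd m i) = η i := Fin.append_left η ν
      have e4 : ∀ i : Fin m, Fin.append η ν (Fin.natAdd k i) = ν i := Fin.append_right η ν
      simp only [e1, e2, e3, e4]
      rw [h1.2, h2.2]
  refine ⟨hmaj, ?_⟩
  intro hne
  intro hDeq
  apply hne
  have hT : ∀ j, topSum (Fin.append γ δ) j = topSum (Fin.append η ν) j := by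
    intro j
    unfold topSum
    rw [hDeq]
  -- from the equality chain, partial sums of γ and η agree at (A j).card
  have hkey : ∀ j, topSum γ (A j).card = topSum η (A j).card := by
    intro j
    have c1 := step1 j
    have c2 := step2 j
    have c3 := step3 j
    have c4 := hT j
    have g1 := h1.1 (A j).card
    have g2 := h2.1 (B j).card
    have g1' : topSum γ (A j).card ≤ topSum η (A j).card := g1
    have g2' : topSum δ (B j).card ≤ topSum ν (B j).card := g2
    linarith
  -- a is "continuous": steps of at most one, starts at 0, ends at k
  have hA0 : (A 0).card = 0 := by
    have : S 0 = ∅ := Sset_zero _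
    simp [hAdef, this]
  have hAtop : (A (k + m)).card = k := by
    have : S (k + m) = univ := Sset_univ _ (le_refl _)
    simp [hAdef, this]
  have hAmono : ∀ j, A j ⊆ A (j + 1) := by
    intro j
    apply Finset.monotone_filter_right
    intro i _ hi
    exact Sset_mono _ (Nat.le_succ j) hi
  have hstep : ∀ j, (A (j + 1)).card ≤ (A j).card + 1 := by
    intro j
    have hsub : S j ⊆ S (j + 1) := Sset_mono _ (Nat.le_succ j)
    have hc : (S (j + 1) \ S j).card ≤ 1 := by
      rw [Finset.card_sdiff_of_subset hsub, hS, card_Sset, card_Sset]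
      omega
    have hinj : (A (j + 1) \ A j).card ≤ (S (j + 1) \ S j).card := by
      apply Finset.card_le_card_of_injOn (fun i => Fin.castAdd m i)
      · intro x hx
        rw [Finset.mem_coe, Finset.mem_sdiff] at hx ⊢
        simp only [hAdef, mem_filter, mem_univ, true_and] at hx
        exact ⟨hx.1, hx.2⟩
      · intro x _ y _ hxy
        exact Fin.castAdd_injective _ _ hxy
    have : (A (j + 1)).card = (A j).card + (A (j + 1) \ A j).card := by
      rw [Finset.card_sdiff_of_subset (hAmono j)]
      have := Finset.card_le_card (hAmono j)
      omega
    omega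
  -- discrete intermediate value: every c ≤ (A j).card is attained
  have hivt : ∀ j, ∀ c ≤ (A j).card, ∃ j', (A j').card = c := by
    intro j
    induction j with
    | zero =>
      intro c hc
      rw [hA0] at hc
      exact ⟨0, by omega⟩
    | succ t ih =>
      intro c hc
      rcases le_or_gt c (A t).card with h | h
      · exact ih c h
      · refine ⟨t + 1, ?_⟩
        have := hstep t
        omega
  have hall : ∀ c, topSum γ c = topSum η c := by
    intro c
    rcases le_or_gt c k with h | h
    · obtain ⟨j', hj'⟩ := hivt (k + m) c (by rw [hAtop]; exact h)
      rw [← hj']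
      exact hkey j'
    · have h1' : topSum γ c = topSum γ k := by
        rw [← topSum_min γ c, Nat.min_eq_right (le_of_lt h)]
      have h2' : topSum η c = topSum η k := by
        rw [← topSum_min η c, Nat.min_eq_right (le_of_lt h)]
      obtain ⟨j', hj'⟩ := hivt (k + m) k (by rw [hAtop])
      have hk := hkey j'
      rw [hj'] at hk
      rw [h1', h2']
      exact hk
  exact dsort_eq_of_topSum γ η hall
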